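/- arXiv:2303.03255 — 2 statements merged into one kernel-verified Lean document; each statement's English description precedes it below -/
import Mathlib

section
/- The integral over all triples (v₁, v₂, v₃) ∈ S² × S² × S² of the absolute value of the determinant |det(v₁, v₂, v₃)| with respect to the product of surface measures equals 8π⁴. -/
open MeasureTheory Metric Matrix

/-- The surface measure on the unit sphere `S² ⊂ ℝ³` (total mass `4π`). -/
noncomputable def sphereMeasure :
    Measure (sphere (0 : EuclideanSpace ℝ (Fin 3)) 1) :=
  (volume : Measure (EuclideanSpace ℝ (Fin 3))).toSphere

/-- The determinant of the 3×3 matrix with columns `a`, `b`, `c`. -/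
noncomputable def det3 (a b c : EuclideanSpace ℝ (Fin 3)) : ℝ :=
  Matrix.det (Matrix.of ![(a : Fin 3 → ℝ), b, c])ᵀ

open Real Set Filter

local notation "E3" => EuclideanSpace ℝ (Fin 3)

/-! ### Polar decomposition of Gaussian-type integrals on `ℝ³` -/

lemma polar3 (n : ℕ) (f : E3 → ℝ)
    (hf : ∀ (r : ℝ), 0 < r → ∀ v : E3, f (r • v) = r ^ n * f v) :
    ∫ x : E3, Real.exp (-‖x‖ ^ 2) * f x =
      (∫ v : sphere (0 : E3) 1, f ↑v ∂sphereMeasure) *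
        ∫ r in Set.Ioi (0 : ℝ), r ^ (n + 2) * Real.exp (-r ^ 2) := by
  set G : sphere (0 : E3) 1 × Ioi (0 : ℝ) → ℝ :=
    fun p => f ↑p.1 * ((p.2 : ℝ) ^ n * Real.exp (-(p.2 : ℝ) ^ 2)) with hG
  have h1 := integral_subtype_comap (μ := (volume : Measure E3))
      (measurableSet_singleton (0 : E3)).compl (fun x => Real.exp (-‖x‖ ^ 2) * f x)
  rw [MeasureTheory.restrict_compl_singleton] at h1
  have h2 := ((volume : Measure E3).measurePreserving_homeomorphUnitSphereProd).integral_comp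
      (Homeomorph.measurableEmbedding _) G
  have h3 : ∀ x : ({0}ᶜ : Set E3),
      G (homeomorphUnitSphereProd E3 x) = Real.exp (-‖(x : E3)‖ ^ 2) * f x.1 := by
    rintro ⟨x, hx⟩
    have hx0 : x ≠ 0 := hx
    have hnorm : (0 : ℝ) < ‖x‖ := norm_pos_iff.2 hx0
    have hfx : f x = ‖x‖ ^ n * f (‖x‖⁻¹ • x) := by
      rw [← hf ‖x‖ hnorm, smul_inv_smul₀ hnorm.ne']
    simp only [hG, homeomorphUnitSphereProd, homeomorphSphereProd, Homeomorph.homeomorph_mk_coe, Equiv.coe_fn_mk,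
      one_smul, div_one]
    rw [hfx]; ring
  have h4 : Module.finrank ℝ E3 - 1 = 2 := by simp
  rw [h4] at h2
  simp only [h3] at h2
  rw [← h1, h2, hG]
  rw [MeasureTheory.integral_prod_mul (f := fun v : sphere (0:E3) 1 => f ↑v)
    (g := fun r : Ioi (0:ℝ) => (r:ℝ) ^ n * Real.exp (-(r:ℝ) ^ 2))]
  congr 1
  simp only [Measure.volumeIoiPow, ENNReal.ofReal]
  rw [integral_withDensity_eq_integral_smul
    ((measurable_subtype_coe.pow_const _).real_toNNReal),
    integral_subtype_comap measurableSet_Ioi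
      (fun a : ℝ => Real.toNNReal (a ^ 2) • (a ^ n * Real.exp (-a ^ 2)))]
  refine setIntegral_congr_fun measurableSet_Ioi fun x hx => ?_
  rw [NNReal.smul_def, Real.coe_toNNReal _ (pow_nonneg hx.out.le _)]
  simp only [smul_eq_mul]; ring

/-! ### One-dimensional Gaussian integrals -/

lemma oneD_gauss : ∫ x : ℝ, Real.exp (-x ^ 2) = Real.sqrt Real.pi := by
  simpa using integral_gaussian 1

lemma integrableOn_pow_mul_exp (n : ℕ) :
    IntegrableOn (fun x : ℝ => x ^ n * Real.exp (-x ^ 2)) (Ioi 0) := by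
  have h := integrableOn_rpow_mul_exp_neg_mul_sq (b := 1) one_pos (s := (n : ℝ))
    (lt_of_lt_of_le (by norm_num) (Nat.cast_nonneg n))
  simpa [Real.rpow_natCast] using h

lemma integrable_exp_neg_sq : Integrable (fun x : ℝ => Real.exp (-x ^ 2)) := by
  simpa using integrable_exp_neg_mul_sq (b := 1) one_pos

lemma tendsto_pow_mul_exp_neg_sq (k : ℕ) :
    Tendsto (fun x : ℝ => x ^ k * Real.exp (-x ^ 2)) atTop (nhds 0) := by
  have hb := Real.tendsto_pow_mul_exp_neg_atTop_nhds_zero k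
  refine tendsto_of_tendsto_of_tendsto_of_le_of_le' tendsto_const_nhds hb ?_ ?_
  · filter_upwards [eventually_ge_atTop (0:ℝ)] with x hx
    positivity
  · filter_upwards [eventually_ge_atTop (1:ℝ)] with x hx
    have h1 : -x ^ 2 ≤ -x := by nlinarith
    have h2 := Real.exp_le_exp.2 h1
    have hxk : (0:ℝ) ≤ x ^ k := by positivity
    exact mul_le_mul_of_nonneg_left h2 hxk

lemma radial_one : ∫ r in Ioi (0:ℝ), Real.exp (-r ^ 2) = Real.sqrt Real.pi / 2 := by
  simpa using integral_gaussian_Ioi 1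

lemma radial_lin : ∫ r in Ioi (0:ℝ), r * Real.exp (-r ^ 2) = 1 / 2 := by
  have hderiv : ∀ x ∈ Ici (0:ℝ), HasDerivAt
      (fun x : ℝ => -Real.exp (-x ^ 2) / 2) (x * Real.exp (-x ^ 2)) x := by
    intro x _
    have h2 : HasDerivAt (fun x : ℝ => Real.exp (-x ^ 2)) (-(2 * x) * Real.exp (-x ^ 2)) x := by
      have := ((hasDerivAt_pow 2 x).neg).exp
      simpa [mul_comm] using this
    have := (h2.fun_neg).div_const 2
    exact this.congr_deriv (by ring)
  have htend : Tendsto (fun x : ℝ => -Real.exp (-x ^ 2) / 2) atTop (nhds 0) := by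
    have h := (Real.tendsto_exp_neg_atTop_nhds_zero.comp
      (tendsto_pow_atTop (n := 2) (by norm_num))).neg.div_const 2
    simp only [neg_zero, zero_div] at h
    refine h.congr (fun x => ?_)
    simp [Function.comp]
  have hint : IntegrableOn (fun x : ℝ => x * Real.exp (-x ^ 2)) (Ioi (0:ℝ)) := by
    have := integrableOn_rpow_mul_exp_neg_mul_sq (b := 1) one_pos (s := (1:ℝ)) (by norm_num)
    simpa using this
  have h := integral_Ioi_of_hasDerivAt_of_tendsto' hderiv hint htend
  norm_num at h
  linarith [h]

lemma oneD_abs : ∫ x : ℝ, |x| * Real.exp (-x ^ 2) = 1 := by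
  have h := integral_comp_abs (f := fun t : ℝ => t * Real.exp (-t ^ 2))
  simp only [sq_abs] at h
  rw [h, radial_lin]
  norm_num

lemma radial_three : ∫ r in Ioi (0:ℝ), r ^ 3 * Real.exp (-r ^ 2) = 1 / 2 := by
  have hderiv : ∀ x ∈ Ici (0:ℝ), HasDerivAt
      (fun x : ℝ => -((x ^ 2 + 1) / 2) * Real.exp (-x ^ 2))
      (x ^ 3 * Real.exp (-x ^ 2)) x := by
    intro x _
    have h1 : HasDerivAt (fun x : ℝ => -((x ^ 2 + 1) / 2)) (-x) x := by
      have := ((hasDerivAt_pow 2 x).add_const 1).div_const 2 |>.fun_neg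
      simpa using this
    have h2 : HasDerivAt (fun x : ℝ => Real.exp (-x ^ 2)) (-(2 * x) * Real.exp (-x ^ 2)) x := by
      have := ((hasDerivAt_pow 2 x).neg).exp
      simpa [mul_comm] using this
    have := h1.fun_mul h2
    exact this.congr_deriv (by ring)
  have htend : Tendsto (fun x : ℝ => -((x ^ 2 + 1) / 2) * Real.exp (-x ^ 2)) atTop (nhds 0) := by
    have h2 := ((tendsto_pow_mul_exp_neg_sq 2).add (tendsto_pow_mul_exp_neg_sq 0)).div_const (-2)
    simp only [add_zero, zero_div] at h2
    refine h2.congr (fun x => ?_)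
    ring
  have h := integral_Ioi_of_hasDerivAt_of_tendsto' hderiv (integrableOn_pow_mul_exp 3) htend
  simpa using h

lemma radial_two : ∫ r in Ioi (0:ℝ), r ^ 2 * Real.exp (-r ^ 2) = Real.sqrt Real.pi / 4 := by
  have hderiv : ∀ x ∈ Ici (0:ℝ), HasDerivAt
      (fun x : ℝ => -(x / 2) * Real.exp (-x ^ 2))
      (x ^ 2 * Real.exp (-x ^ 2) - Real.exp (-x ^ 2) / 2) x := by
    intro x _
    have h1 : HasDerivAt (fun x : ℝ => -(x / 2)) (-(1/2) : ℝ) x := by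
      simpa using ((hasDerivAt_id x).div_const 2).fun_neg
    have h2 : HasDerivAt (fun x : ℝ => Real.exp (-x ^ 2)) (-(2 * x) * Real.exp (-x ^ 2)) x := by
      have := ((hasDerivAt_pow 2 x).neg).exp
      simpa [mul_comm] using this
    have := h1.fun_mul h2
    exact this.congr_deriv (by ring)
  have htend : Tendsto (fun x : ℝ => -(x / 2) * Real.exp (-x ^ 2)) atTop (nhds 0) := by
    have h2 := (tendsto_pow_mul_exp_neg_sq 1).div_const (-2)
    simp only [zero_div] at h2
    refine h2.congr (fun x => ?_)
    ring
  have hg : IntegrableOn (fun x : ℝ => Real.exp (-x ^ 2) / 2) (Ioi (0:ℝ)) :=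
    (integrable_exp_neg_sq.div_const 2).integrableOn
  have hint : IntegrableOn (fun x : ℝ => x ^ 2 * Real.exp (-x ^ 2) - Real.exp (-x ^ 2) / 2)
      (Ioi (0:ℝ)) := (integrableOn_pow_mul_exp 2).sub hg
  have h := integral_Ioi_of_hasDerivAt_of_tendsto' hderiv hint htend
  have hsub := integral_sub (integrableOn_pow_mul_exp 2) hg
  have hg2 : ∫ x in Ioi (0:ℝ), Real.exp (-x ^ 2) / 2 = Real.sqrt Real.pi / 4 := by
    rw [integral_div, radial_one]; ring
  norm_num at h
  rw [hsub, hg2] at h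
  linarith

/-! ### Multi-dimensional Gaussian integrals -/

lemma euclid_pi_integral {n : ℕ} (g : (Fin n → ℝ) → ℝ) :
    (∫ x : EuclideanSpace ℝ (Fin n), g x) = ∫ y : Fin n → ℝ, g y :=
  (EuclideanSpace.volume_preserving_symm_measurableEquiv_toLp (Fin n)).integral_comp' g

lemma norm_sq_eq3 (x : E3) :
    ‖x‖ ^ 2 = (x 0) ^ 2 + (x 1) ^ 2 + (x 2) ^ 2 := by
  rw [EuclideanSpace.norm_eq, Real.sq_sqrt (by positivity)]
  simp [Fin.sum_univ_three, Real.norm_eq_abs, sq_abs]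

lemma gaussE3 : ∫ x : E3, Real.exp (-‖x‖ ^ 2) = Real.sqrt Real.pi ^ 3 := by
  have key : ∀ x : E3,
      Real.exp (-‖x‖ ^ 2) = ∏ i, Real.exp (-(x i) ^ 2) := by
    intro x
    rw [EuclideanSpace.norm_eq, Real.sq_sqrt (by positivity), ← Real.exp_sum]
    congr 1
    simp [Real.norm_eq_abs, sq_abs]
  simp_rw [key]
  rw [euclid_pi_integral (fun y : Fin 3 → ℝ => ∏ i, Real.exp (-(y i) ^ 2)), MeasureTheory.volume_pi,
    MeasureTheory.integral_fintype_prod_eq_pow (ι := Fin 3) (fun t : ℝ => Real.exp (-t ^ 2)),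
    oneD_gauss]
  norm_num

lemma gaussAbs : ∫ y : E3, Real.exp (-‖y‖ ^ 2) * |y 0| = Real.pi := by
  have key : ∀ y : E3, Real.exp (-‖y‖ ^ 2) * |y 0|
      = ∏ i, (if i = 0 then fun t : ℝ => |t| * Real.exp (-t ^ 2)
          else fun t : ℝ => Real.exp (-t ^ 2)) (y i) := by
    intro y
    rw [norm_sq_eq3]
    simp only [Fin.prod_univ_three]
    norm_num [Fin.ext_iff]
    rw [Real.exp_add, Real.exp_add]
    ring
  simp_rw [key]
  rw [euclid_pi_integral (fun y : Fin 3 → ℝ => ∏ i, (if i = 0 then fun t : ℝ => |t| * Real.exp (-t ^ 2)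
            else fun t : ℝ => Real.exp (-t ^ 2)) (y i)), MeasureTheory.volume_pi, MeasureTheory.integral_fintype_prod_eq_prod (ι := Fin 3)
    (fun i => (if i = 0 then fun t : ℝ => |t| * Real.exp (-t ^ 2)
          else fun t : ℝ => Real.exp (-t ^ 2)))]
  simp only [Fin.prod_univ_three, if_pos rfl, if_true,
    if_neg (show (1 : Fin 3) ≠ 0 by decide), if_neg (show (2 : Fin 3) ≠ 0 by decide)]
  rw [oneD_abs, oneD_gauss, one_mul, Real.mul_self_sqrt Real.pi_pos.le]

lemma gauss2 : ∫ w : EuclideanSpace ℝ (Fin 2), Real.exp (-‖w‖ ^ 2) * ‖w‖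
    = Real.pi * Real.sqrt Real.pi / 2 := by
  have h := integral_fun_norm_addHaar (volume : Measure (EuclideanSpace ℝ (Fin 2)))
    (fun t : ℝ => Real.exp (-t ^ 2) * t)
  simp only [finrank_euclideanSpace_fin] at h
  rw [h, measureReal_def, EuclideanSpace.volume_ball]
  have hγ : Real.Gamma ((Fintype.card (Fin 2) : ℝ) / 2 + 1) = 1 := by
    norm_num [Real.Gamma_two]
  rw [hγ]
  simp only [Fintype.card_fin, Real.sq_sqrt Real.pi_pos.le]
  have hrad : ∫ y in Ioi (0:ℝ), y ^ (2 - 1) • (Real.exp (-y ^ 2) * y)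
      = Real.sqrt Real.pi / 4 := by
    rw [← radial_two]
    refine setIntegral_congr_fun measurableSet_Ioi fun x hx => ?_
    simp only [pow_one, smul_eq_mul]
    ring
  rw [hrad]
  simp [ENNReal.toReal_ofReal Real.pi_pos.le]
  ring

lemma gaussCross : ∫ z : E3,
    Real.exp (-‖z‖ ^ 2) * Real.sqrt ((z 1) ^ 2 + (z 2) ^ 2) = Real.pi ^ 2 / 2 := by
  have key : ∀ z : E3,
      Real.exp (-‖z‖ ^ 2) * Real.sqrt ((z 1) ^ 2 + (z 2) ^ 2)
      = Real.exp (-(z 0) ^ 2) *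
          (Real.exp (-((z 1) ^ 2 + (z 2) ^ 2)) * Real.sqrt ((z 1) ^ 2 + (z 2) ^ 2)) := by
    intro z
    rw [EuclideanSpace.norm_eq, Real.sq_sqrt (by positivity)]
    simp only [Fin.sum_univ_three, Real.norm_eq_abs, sq_abs]
    rw [show -(z 0 ^ 2 + z 1 ^ 2 + z 2 ^ 2) = -(z 0)^2 + -((z 1)^2 + (z 2)^2) by ring,
      Real.exp_add]
    ring
  simp_rw [key]
  rw [euclid_pi_integral (fun z : Fin 3 → ℝ => Real.exp (-(z 0) ^ 2) *
    (Real.exp (-((z 1) ^ 2 + (z 2) ^ 2)) * Real.sqrt ((z 1) ^ 2 + (z 2) ^ 2)))]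
  set g : ℝ × (Fin 2 → ℝ) → ℝ := fun p => Real.exp (-(p.1) ^ 2) *
    (Real.exp (-((p.2 0) ^ 2 + (p.2 1) ^ 2)) * Real.sqrt ((p.2 0) ^ 2 + (p.2 1) ^ 2)) with hg
  have hsplit := (MeasureTheory.volume_preserving_piFinSuccAbove
    (fun _ : Fin 3 => ℝ) 0).integral_comp' g
  have heq : ∀ z : Fin 3 → ℝ, g (MeasurableEquiv.piFinSuccAbove (fun _ : Fin 3 => ℝ) 0 z)
      = Real.exp (-(z 0) ^ 2) *
        (Real.exp (-((z 1) ^ 2 + (z 2) ^ 2)) * Real.sqrt ((z 1) ^ 2 + (z 2) ^ 2)) := by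
    intro z
    simp only [hg, MeasurableEquiv.piFinSuccAbove, MeasurableEquiv.coe_mk,
      Fin.insertNthEquiv, Equiv.coe_fn_symm_mk, Fin.zero_succAbove]
    norm_num [Fin.tail]
  simp_rw [heq] at hsplit
  have hsplit' : (∫ y : Fin 3 → ℝ, Real.exp (-(y 0) ^ 2) *
      (Real.exp (-((y 1) ^ 2 + (y 2) ^ 2)) * Real.sqrt ((y 1) ^ 2 + (y 2) ^ 2)))
      = ∫ p : ℝ × (Fin 2 → ℝ), g p := hsplit
  rw [hsplit']
  rw [hg, Measure.volume_eq_prod, MeasureTheory.integral_prod_mul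
    (f := fun t : ℝ => Real.exp (-t ^ 2))
    (g := fun w : Fin 2 → ℝ => Real.exp (-((w 0) ^ 2 + (w 1) ^ 2)) *
      Real.sqrt ((w 0) ^ 2 + (w 1) ^ 2)), oneD_gauss]
  have hnorm : ∀ w : EuclideanSpace ℝ (Fin 2),
      Real.exp (-((w 0) ^ 2 + (w 1) ^ 2)) * Real.sqrt ((w 0) ^ 2 + (w 1) ^ 2)
      = Real.exp (-‖w‖ ^ 2) * ‖w‖ := by
    intro w
    rw [EuclideanSpace.norm_eq, Real.sq_sqrt (by positivity)]
    simp [Fin.sum_univ_two, Real.norm_eq_abs, sq_abs]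
  have h2 : (∫ w : Fin 2 → ℝ, Real.exp (-((w 0) ^ 2 + (w 1) ^ 2)) *
      Real.sqrt ((w 0) ^ 2 + (w 1) ^ 2)) = Real.pi * Real.sqrt Real.pi / 2 := by
    rw [← euclid_pi_integral (fun w : Fin 2 → ℝ => Real.exp (-((w 0) ^ 2 + (w 1) ^ 2)) *
      Real.sqrt ((w 0) ^ 2 + (w 1) ^ 2))]
    simp_rw [hnorm]
    exact gauss2
  rw [h2]
  rw [show Real.pi ^ 2 = (Real.sqrt Real.pi * Real.sqrt Real.pi) * Real.pi by
    rw [Real.mul_self_sqrt Real.pi_pos.le]; ring]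
  ring

/-! ### The cross product on `E3` -/

noncomputable def crossE (a b : E3) : E3 :=
  (WithLp.equiv 2 (Fin 3 → ℝ)).symm
    ![a 1 * b 2 - a 2 * b 1, a 2 * b 0 - a 0 * b 2, a 0 * b 1 - a 1 * b 0]

lemma crossE_apply0 (a b : E3) : crossE a b 0 = a 1 * b 2 - a 2 * b 1 := rfl
lemma crossE_apply1 (a b : E3) : crossE a b 1 = a 2 * b 0 - a 0 * b 2 := rfl
lemma crossE_apply2 (a b : E3) : crossE a b 2 = a 0 * b 1 - a 1 * b 0 := rfl

lemma det3_eq_inner (a b c : E3) : det3 a b c = (inner ℝ (crossE a b) c : ℝ) := by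
  rw [det3, Matrix.det_transpose, Matrix.det_fin_three, PiLp.inner_apply]
  simp only [RCLike.inner_apply, conj_trivial, Fin.sum_univ_three,
    crossE_apply0, crossE_apply1, crossE_apply2, Matrix.of_apply,
    Matrix.cons_val', Matrix.cons_val_zero, Matrix.cons_val_one, Matrix.head_cons,
    Matrix.cons_val_two, Matrix.tail_cons, Matrix.empty_val', Matrix.cons_val_fin_one,
    Matrix.head_fin_const]
  ring

lemma smul_apply3 (r : ℝ) (y : E3) (i : Fin 3) : (r • y) i = r * y i := rfl

lemma crossE_smul_right (r : ℝ) (a b : E3) : crossE a (r • b) = r • crossE a b := by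
  refine PiLp.ext fun i => ?_
  match i with
  | 0 =>
    show a 1 * (r • b) 2 - a 2 * (r • b) 1 = r * (a 1 * b 2 - a 2 * b 1)
    simp only [smul_apply3]; ring
  | 1 =>
    show a 2 * (r • b) 0 - a 0 * (r • b) 2 = r * (a 2 * b 0 - a 0 * b 2)
    simp only [smul_apply3]; ring
  | 2 =>
    show a 0 * (r • b) 1 - a 1 * (r • b) 0 = r * (a 0 * b 1 - a 1 * b 0)
    simp only [smul_apply3]; ring

lemma norm_crossE (u y : E3) (hu : ‖u‖ = 1) :
    ‖crossE u y‖ = Real.sqrt (‖y‖ ^ 2 - (inner ℝ u y : ℝ) ^ 2) := by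
  have hu2 : (u 0) ^ 2 + (u 1) ^ 2 + (u 2) ^ 2 = 1 := by
    have := norm_sq_eq3 u
    rw [hu] at this
    linarith [this]
  rw [EuclideanSpace.norm_eq]
  congr 1
  simp only [Real.norm_eq_abs, sq_abs, Fin.sum_univ_three,
    crossE_apply0, crossE_apply1, crossE_apply2]
  rw [norm_sq_eq3, PiLp.inner_apply]
  simp only [RCLike.inner_apply, conj_trivial, Fin.sum_univ_three]
  linear_combination ((y 0) ^ 2 + (y 1) ^ 2 + (y 2) ^ 2) * hu2

/-! ### Rotations -/

lemma exists_onb (u : E3) (hu : ‖u‖ = 1) :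
    ∃ b : OrthonormalBasis (Fin 3) ℝ E3, b 0 = u := by
  have hortho : Orthonormal ℝ (Set.restrict {0} (fun _ : Fin 3 => u)) := by
    rw [orthonormal_iff_ite]
    intro i j
    have hij : i = j := Subsingleton.elim i j
    subst hij
    rw [if_pos rfl]
    show (inner ℝ u u : ℝ) = 1
    rw [real_inner_self_eq_norm_sq, hu]
    norm_num
  obtain ⟨b, hb⟩ := hortho.exists_orthonormalBasis_extension_of_card_eq (by simp)
  exact ⟨b, hb 0 rfl⟩

lemma rot_gauss (u : E3) (hu : ‖u‖ = 1) (g : EuclideanSpace ℝ (Fin 3) → ℝ)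
    (F : E3 → ℝ)
    (hF : ∀ (b : OrthonormalBasis (Fin 3) ℝ E3), b 0 = u → ∀ x : E3, F x = g (b.repr x)) :
    ∫ x : E3, F x = ∫ y : EuclideanSpace ℝ (Fin 3), g y := by
  obtain ⟨b, hb0⟩ := exists_onb u hu
  have hmp := (b.measurePreserving_repr).integral_comp
    (b.repr.toHomeomorph.measurableEmbedding) g
  calc ∫ x : E3, F x = ∫ x : E3, g (b.repr x) := by simp_rw [hF b hb0]
    _ = ∫ y : EuclideanSpace ℝ (Fin 3), g y := hmp

/-! ### Sphere integrals -/

lemma sphere_total : (sphereMeasure Set.univ).toReal = 4 * Real.pi := by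
  have hp := polar3 0 (fun _ => (1:ℝ)) (by intro r hr v; simp)
  have hp' : ∫ x : E3, Real.exp (-‖x‖ ^ 2)
      = (∫ (_ : sphere (0:E3) 1), (1:ℝ) ∂sphereMeasure) *
        ∫ r in Ioi (0:ℝ), r ^ 2 * Real.exp (-r ^ 2) := by simpa using hp
  rw [gaussE3, radial_two, integral_const, smul_eq_mul, mul_one] at hp'
  have hs : (0:ℝ) < Real.sqrt Real.pi := Real.sqrt_pos.2 Real.pi_pos
  have hcube : Real.sqrt Real.pi ^ 3 = Real.pi * Real.sqrt Real.pi := by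
    rw [pow_succ, pow_two, Real.mul_self_sqrt Real.pi_pos.le]
  have hmul : (sphereMeasure Set.univ).toReal * Real.sqrt Real.pi
      = (4 * Real.pi) * Real.sqrt Real.pi := by
    rw [hcube] at hp'
    field_simp at hp'
    rw [measureReal_def] at hp'; rw [← hp']; ring
  exact mul_right_cancel₀ hs.ne' hmul

lemma stepA (w : E3) :
    ∫ v : sphere (0:E3) 1, |(inner ℝ w (v:E3) : ℝ)| ∂sphereMeasure = 2 * Real.pi * ‖w‖ := by
  rcases eq_or_ne w 0 with rfl | hw
  · simp
  have hnw : 0 < ‖w‖ := norm_pos_iff.2 hw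
  set u : E3 := ‖w‖⁻¹ • w with hudef
  have hu1 : ‖u‖ = 1 := by
    rw [hudef, norm_smul, norm_inv, norm_norm, inv_mul_cancel₀ hnw.ne']
  have hwu : w = ‖w‖ • u := by rw [hudef, smul_inv_smul₀ hnw.ne']
  have hsplit : ∀ v : E3, |(inner ℝ w v : ℝ)| = ‖w‖ * |(inner ℝ u v : ℝ)| := by
    intro v
    conv_lhs => rw [hwu]
    rw [real_inner_smul_left, abs_mul, abs_of_pos hnw]
  simp_rw [hsplit]
  rw [MeasureTheory.integral_const_mul]
  have key : ∫ v : sphere (0:E3) 1, |(inner ℝ u (v:E3) : ℝ)| ∂sphereMeasure = 2 * Real.pi := by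
    have hpolar := polar3 1 (fun x => |(inner ℝ u x : ℝ)|) (by
      intro r hr v
      show |(inner ℝ u (r • v) : ℝ)| = r ^ 1 * |(inner ℝ u v : ℝ)|
      rw [real_inner_smul_right, abs_mul, abs_of_pos hr, pow_one])
    have hgauss : ∫ x : E3, Real.exp (-‖x‖ ^ 2) * |(inner ℝ u x : ℝ)| = Real.pi := by
      rw [rot_gauss u hu1 (fun y => Real.exp (-‖y‖ ^ 2) * |y 0|)
        (fun x => Real.exp (-‖x‖ ^ 2) * |(inner ℝ u x : ℝ)|) ?_, gaussAbs]
      intro b hb0 x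
      have hinner : (inner ℝ u x : ℝ) = b.repr x 0 := by
        rw [← hb0, ← b.repr.inner_map_map (b 0) x, b.repr_self]
        rw [EuclideanSpace.inner_single_left]
        simp
      show Real.exp (-‖x‖ ^ 2) * |(inner ℝ u x : ℝ)|
        = Real.exp (-‖b.repr x‖ ^ 2) * |b.repr x 0|
      rw [hinner, b.repr.norm_map x]
    rw [hgauss] at hpolar
    rw [show 1 + 2 = 3 from rfl, radial_three] at hpolar
    linarith [hpolar]
  rw [key]
  ring

lemma stepB (u : E3) (hu : ‖u‖ = 1) :
    ∫ v : sphere (0:E3) 1, ‖crossE u (v:E3)‖ ∂sphereMeasure = Real.pi ^ 2 := by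
  have hpolar := polar3 1 (fun y => ‖crossE u y‖) (by
    intro r hr v
    show ‖crossE u (r • v)‖ = r ^ 1 * ‖crossE u v‖
    rw [crossE_smul_right, norm_smul, Real.norm_eq_abs, abs_of_pos hr, pow_one])
  have hgauss : ∫ y : E3, Real.exp (-‖y‖ ^ 2) * ‖crossE u y‖ = Real.pi ^ 2 / 2 := by
    rw [rot_gauss u hu (fun z => Real.exp (-‖z‖ ^ 2) * Real.sqrt ((z 1) ^ 2 + (z 2) ^ 2))
      (fun y => Real.exp (-‖y‖ ^ 2) * ‖crossE u y‖) ?_, gaussCross]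
    intro b hb0 y
    have hinner : (inner ℝ u y : ℝ) = b.repr y 0 := by
      rw [← hb0, ← b.repr.inner_map_map (b 0) y, b.repr_self]
      rw [EuclideanSpace.inner_single_left]
      simp
    show Real.exp (-‖y‖ ^ 2) * ‖crossE u y‖ = Real.exp (-‖b.repr y‖ ^ 2) *
      Real.sqrt ((b.repr y 1) ^ 2 + (b.repr y 2) ^ 2)
    rw [norm_crossE u y hu, hinner, b.repr.norm_map y]
    congr 2
    rw [← b.repr.norm_map y, norm_sq_eq3 (b.repr y)]
    ring
  rw [hgauss] at hpolar
  rw [show 1 + 2 = 3 from rfl, radial_three] at hpolar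
  linarith [hpolar]

/-- The integral over all triples `(v₁, v₂, v₃) ∈ S² × S² × S²` of
`|det(v₁, v₂, v₃)|`, with respect to the product of surface measures,
equals `8π⁴`. -/
theorem integral_abs_det_sphere_triple :
    ∫ v₁ : sphere (0 : EuclideanSpace ℝ (Fin 3)) 1,
      ∫ v₂ : sphere (0 : EuclideanSpace ℝ (Fin 3)) 1,
        ∫ v₃ : sphere (0 : EuclideanSpace ℝ (Fin 3)) 1,
          |det3 (v₁ : EuclideanSpace ℝ (Fin 3)) v₂ v₃|
            ∂sphereMeasure ∂sphereMeasure ∂sphereMeasure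
      = 8 * Real.pi ^ 4 := by
  have hmain : ∀ v₁ : sphere (0:E3) 1,
      (∫ v₂ : sphere (0:E3) 1, ∫ v₃ : sphere (0:E3) 1,
        |det3 (v₁:E3) v₂ v₃| ∂sphereMeasure ∂sphereMeasure) = 2 * Real.pi ^ 3 := by
    intro v₁
    have hv1 : ‖(v₁ : E3)‖ = 1 := by
      have := v₁.2
      rwa [mem_sphere_zero_iff_norm] at this
    have hinner : ∀ v₂ : sphere (0:E3) 1,
        (∫ v₃ : sphere (0:E3) 1, |det3 (v₁:E3) v₂ v₃| ∂sphereMeasure)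
        = 2 * Real.pi * ‖crossE (v₁:E3) (v₂:E3)‖ := by
      intro v₂
      simp_rw [det3_eq_inner]
      exact stepA (crossE (v₁:E3) (v₂:E3))
    simp_rw [hinner]
    rw [MeasureTheory.integral_const_mul, stepB (v₁:E3) hv1]
    ring
  simp_rw [hmain]
  rw [integral_const, smul_eq_mul, measureReal_def, sphere_total]
  ring
end

section
/- If a compact convex body K ⊂ ℝ³ is such that for every affine plane E, the intersection K ∩ E (when nonempty with nonempty relative interior) is a Euclidean disc, then K is a Euclidean ball. -/
open Metric

noncomputable section

abbrev E3 := EuclideanSpace ℝ (Fin 3)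

/-- In `ℝ³` there is a nonzero vector orthogonal to any two given vectors. -/
lemma aux_exists_normal (u v : E3) : ∃ n : E3, n ≠ 0 ∧
    inner (𝕜 := ℝ) n u = 0 ∧ inner (𝕜 := ℝ) n v = 0 := by
  classical
  set f : E3 →ₗ[ℝ] ℝ × ℝ := ((innerSL ℝ u).toLinearMap.prod (innerSL ℝ v).toLinearMap)
  have hker : LinearMap.ker f ≠ ⊥ := by
    intro h
    have hinj : Function.Injective f := LinearMap.ker_eq_bot.mp h
    have := LinearMap.finrank_le_finrank_of_injective hinj
    simp [Module.finrank_prod] at this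
  obtain ⟨n, hn, hn0⟩ := Submodule.exists_mem_ne_zero_of_ne_bot hker
  have h1 : f n = 0 := hn
  have h2 : inner (𝕜 := ℝ) u n = 0 ∧ inner (𝕜 := ℝ) v n = 0 := by
    simpa [f, LinearMap.prod_apply, Prod.ext_iff] using h1
  exact ⟨n, hn0, by rw [real_inner_comm]; exact h2.1, by rw [real_inner_comm]; exact h2.2⟩

/-- The median identity (parallelogram law). -/
lemma aux_median (x a b : E3) :
    4 * ‖x - midpoint ℝ a b‖^2 + ‖a - b‖^2 = 2*‖x-a‖^2 + 2*‖x-b‖^2 := by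
  have h := parallelogram_law_with_norm ℝ (x - a) (x - b)
  have hm : midpoint ℝ a b = (2⁻¹:ℝ) • (a + b) := by
    rw [midpoint_eq_smul_add, invOf_eq_inv]
  have e1 : (x - a) + (x - b) = (2:ℝ) • (x - midpoint ℝ a b) := by rw [hm]; module
  have e2 : (x - a) - (x - b) = b - a := by abel
  rw [e1, e2, norm_smul, norm_sub_rev b a] at h
  simp only [Real.norm_ofNat] at h
  nlinarith [h]

/-- If `a, b` realize the diameter of the convex body `K` and `E` is a plane through
`a` and `b`, then the section `K ∩ E` is the disc with diameter `[a, b]` in `E`. -/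
lemma aux_plane_section_eq
    (K : Set E3) (hKc : Convex ℝ K)
    (hdisc : ∀ (n : E3) (d : ℝ), n ≠ 0 →
      (intrinsicInterior ℝ (K ∩ {x : E3 | inner (𝕜 := ℝ) n x = d})).Nonempty →
      ∃ (x₀ : E3) (ρ : ℝ), 0 ≤ ρ ∧ inner (𝕜 := ℝ) n x₀ = d ∧
        K ∩ {x : E3 | inner (𝕜 := ℝ) n x = d} =
          closedBall x₀ ρ ∩ {x : E3 | inner (𝕜 := ℝ) n x = d})
    (a b : E3) (haK : a ∈ K) (hbK : b ∈ K) (hab : a ≠ b)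
    (hdiam : ∀ x ∈ K, ∀ y ∈ K, dist x y ≤ dist a b)
    (n : E3) (d : ℝ) (hn : n ≠ 0)
    (hna : inner (𝕜 := ℝ) n a = d) (hnb : inner (𝕜 := ℝ) n b = d) :
    K ∩ {x : E3 | inner (𝕜 := ℝ) n x = d} =
      closedBall (midpoint ℝ a b) (dist a b / 2) ∩ {x : E3 | inner (𝕜 := ℝ) n x = d} := by
  set E := {x : E3 | inner (𝕜 := ℝ) n x = d} with hE
  have haE : a ∈ E := hna
  have hbE : b ∈ E := hnb
  have hEc : Convex ℝ E :=
    convex_hyperplane (⟨fun x y => inner_add_right n x y,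
      fun c x => real_inner_smul_right n x c⟩ : IsLinearMap ℝ (fun x : E3 => inner (𝕜 := ℝ) n x)) d
  have hii : (intrinsicInterior ℝ (K ∩ E)).Nonempty :=
    Set.Nonempty.intrinsicInterior (hKc.inter hEc) ⟨a, haK, haE⟩
  obtain ⟨x₀, ρ, hρ, hx₀, hsec⟩ := hdisc n d hn hii
  have hN2 : (0:ℝ) < ‖n‖^2 := by
    have := norm_pos_iff.mpr hn; positivity
  set t : ℝ := (inner (𝕜 := ℝ) n x₀ - d)/‖n‖^2 with ht
  set c : E3 := x₀ - t • n with hc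
  have hnc : inner (𝕜 := ℝ) n c = d := by
    simp only [hc, inner_sub_right, real_inner_smul_right, real_inner_self_eq_norm_sq, ht]
    field_simp
    ring
  have key : ∀ y ∈ E, ‖y - x₀‖^2 = ‖y - c‖^2 + t^2 * ‖n‖^2 := by
    intro y hy
    have hyE : inner (𝕜 := ℝ) n y = d := hy
    have horth : inner (𝕜 := ℝ) (y - c) (t • n) = 0 := by
      rw [real_inner_comm, inner_smul_left, inner_sub_right, hyE, hnc]
      simp
    have hdec : y - x₀ = (y - c) - t • n := by rw [hc]; abel
    rw [hdec, @norm_sub_sq_real, horth, norm_smul]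
    rw [mul_pow, Real.norm_eq_abs, sq_abs]
    ring
  have hab' : a ∈ closedBall x₀ ρ := (hsec ▸ Set.mem_inter haK haE).1
  have hbb' : b ∈ closedBall x₀ ρ := (hsec ▸ Set.mem_inter hbK hbE).1
  have hsnn : 0 ≤ ρ^2 - t^2 * ‖n‖^2 := by
    have h1 : ‖a - x₀‖ ≤ ρ := by rwa [mem_closedBall, dist_eq_norm] at hab'
    have h2 := key a haE
    nlinarith [norm_nonneg (a - c), norm_nonneg (a - x₀)]
  set r : ℝ := Real.sqrt (ρ^2 - t^2 * ‖n‖^2) with hr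
  have hrnn : 0 ≤ r := Real.sqrt_nonneg _
  have hr2 : r^2 = ρ^2 - t^2 * ‖n‖^2 := Real.sq_sqrt hsnn
  have hball : ∀ y ∈ E, (y ∈ closedBall x₀ ρ ↔ ‖y - c‖ ≤ r) := by
    intro y hy
    rw [mem_closedBall, dist_eq_norm]
    constructor
    · intro h
      have h2 := key y hy
      nlinarith [norm_nonneg (y - c), norm_nonneg (y - x₀)]
    · intro h
      have h2 := key y hy
      nlinarith [norm_nonneg (y - c), norm_nonneg (y - x₀), hρ]
  have hKE : K ∩ E = closedBall c r ∩ E := by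
    rw [hsec]
    ext y
    simp only [Set.mem_inter_iff, mem_closedBall, dist_eq_norm]
    constructor
    · rintro ⟨h1, h2⟩; exact ⟨by rw [← dist_eq_norm] at h1 ⊢; exact (hball y h2).1 h1, h2⟩
    · rintro ⟨h1, h2⟩; exact ⟨by rw [← dist_eq_norm] at h1 ⊢; exact (hball y h2).2 h1, h2⟩
  -- a, b are in closedBall c r
  have hac : dist a c ≤ r := by
    have : a ∈ closedBall c r ∩ E := hKE ▸ Set.mem_inter haK haE
    exact mem_closedBall.mp this.1
  have hbc : dist b c ≤ r := by
    have : b ∈ closedBall c r ∩ E := hKE ▸ Set.mem_inter hbK hbE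
    exact mem_closedBall.mp this.1
  -- 2r ≤ dist a b
  have habne : a - b ≠ 0 := sub_ne_zero.mpr hab
  set u : E3 := ‖a - b‖⁻¹ • (a - b) with hu
  have hun : ‖u‖ = 1 := by
    rw [hu, norm_smul, norm_inv, norm_norm, inv_mul_cancel₀ (norm_ne_zero_iff.mpr habne)]
  have hnu : inner (𝕜 := ℝ) n u = 0 := by
    rw [hu, real_inner_smul_right, inner_sub_right, hna, hnb]; simp
  have hp : ∀ s : ℝ, |s| ≤ r → c + s • u ∈ K := by
    intro s hs
    have hpE : c + s • u ∈ E := by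
      show inner (𝕜 := ℝ) n (c + s • u) = d
      rw [inner_add_right, real_inner_smul_right, hnu, hnc]; ring
    have hpB : c + s • u ∈ closedBall c r := by
      rw [mem_closedBall, dist_eq_norm]
      have : c + s • u - c = s • u := by abel
      rw [this, norm_smul, hun, mul_one, Real.norm_eq_abs]; exact hs
    have : c + s • u ∈ K ∩ E := hKE ▸ Set.mem_inter hpB hpE
    exact this.1
  have h2r : 2 * r ≤ dist a b := by
    have h1 : c + r • u ∈ K := hp r (by rw [abs_of_nonneg hrnn])
    have h2 : c + (-r) • u ∈ K := hp (-r) (by rw [abs_neg, abs_of_nonneg hrnn])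
    have h3 := hdiam _ h1 _ h2
    have h4 : dist (c + r • u) (c + (-r) • u) = 2 * r := by
      rw [dist_eq_norm]
      have : c + r • u - (c + (-r) • u) = (2*r) • u := by module
      rw [this, norm_smul, hun, mul_one, Real.norm_eq_abs, abs_of_nonneg (by linarith)]
    rw [h4] at h3; linarith
  have hD2 : dist a b ≤ dist a c + dist c b := dist_triangle a c b
  have hcb : dist c b = dist b c := dist_comm c b
  rw [hcb] at hD2
  have hrD : r = dist a b / 2 := by linarith
  have hacD : dist a c = dist a b / 2 := by linarith
  have hbcD : dist b c = dist a b / 2 := by linarith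
  clear_value t c r
  clear hp hball key hnc hnu hun
  have hcm : c = midpoint ℝ a b := by
    have hmed := aux_median c a b
    have e1 : ‖c - a‖ = dist a b / 2 := by rw [← dist_eq_norm, dist_comm]; exact hacD
    have e2 : ‖c - b‖ = dist a b / 2 := by rw [← dist_eq_norm, dist_comm]; exact hbcD
    have e3 : ‖a - b‖ = dist a b := (dist_eq_norm a b).symm
    rw [e1, e2, e3] at hmed
    have h4 : 2*(dist a b/2)^2 + 2*(dist a b/2)^2 = (dist a b)^2 := by ring
    have h5 : ‖c - midpoint ℝ a b‖^2 = 0 := by linarith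
    have h0 : ‖c - midpoint ℝ a b‖ = 0 := by
      exact pow_eq_zero_iff two_ne_zero |>.mp h5
    exact sub_eq_zero.mp (norm_eq_zero.mp h0)
  rw [hKE, hcm, hrD]

/-- If every affine plane section of a compact convex body `K ⊂ ℝ³` which has nonempty
relative interior is a Euclidean disc, then `K` is a Euclidean ball. -/
theorem ball_of_all_sections_discs
    (K : Set E3) (hK : IsCompact K) (hKc : Convex ℝ K) (hKint : (interior K).Nonempty)
    (hdisc : ∀ (n : E3) (d : ℝ), n ≠ 0 →
      (intrinsicInterior ℝ (K ∩ {x : E3 | inner (𝕜 := ℝ) n x = d})).Nonempty →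
      ∃ (x₀ : E3) (ρ : ℝ), 0 ≤ ρ ∧ inner (𝕜 := ℝ) n x₀ = d ∧
        K ∩ {x : E3 | inner (𝕜 := ℝ) n x = d} =
          closedBall x₀ ρ ∩ {x : E3 | inner (𝕜 := ℝ) n x = d}) :
    ∃ (x₀ : E3) (ρ : ℝ), K = closedBall x₀ ρ := by
  obtain ⟨z, hz⟩ := hKint
  have hzK : z ∈ K := interior_subset hz
  have hKne : K.Nonempty := ⟨z, hzK⟩
  -- the diameter of K is attained at some pair (a, b)
  obtain ⟨⟨a, b⟩, habK, hmax⟩ :=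
    (hK.prod hK).exists_isMaxOn (hKne.prod hKne)
      (continuous_dist.continuousOn : ContinuousOn (fun p : E3 × E3 => dist p.1 p.2) _)
  have haK : a ∈ K := habK.1
  have hbK : b ∈ K := habK.2
  have hdiam : ∀ x ∈ K, ∀ y ∈ K, dist x y ≤ dist a b := by
    intro x hx y hy
    exact isMaxOn_iff.mp hmax (x, y) (Set.mk_mem_prod hx hy)
  -- a ≠ b, since K has nonempty interior
  obtain ⟨ε, hε, hball⟩ := Metric.isOpen_iff.mp isOpen_interior z hz
  have hab : a ≠ b := by
    intro h
    set w : E3 := z + (ε/2) • (EuclideanSpace.single (0 : Fin 3) (1:ℝ)) with hw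
    have hwz : dist w z = ε/2 := by
      rw [dist_eq_norm, hw]
      have : z + (ε/2) • (EuclideanSpace.single (0 : Fin 3) (1:ℝ)) - z
          = (ε/2) • (EuclideanSpace.single (0 : Fin 3) (1:ℝ)) := by abel
      rw [this, norm_smul, EuclideanSpace.norm_single]
      simp [abs_of_pos hε]
    have hwK : w ∈ K := interior_subset (hball (by rw [mem_ball, hwz]; linarith))
    have := hdiam w hwK z hzK
    rw [h, dist_self, hwz] at this
    linarith
  refine ⟨midpoint ℝ a b, dist a b / 2, ?_⟩
  ext x
  obtain ⟨n, hn, hn1, hn2⟩ := aux_exists_normal (a - b) (x - a)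
  have hnab : inner (𝕜 := ℝ) n b = inner (𝕜 := ℝ) n a := by
    have := inner_sub_right (𝕜 := ℝ) n a b
    rw [hn1] at this; linarith
  have hnx : inner (𝕜 := ℝ) n x = inner (𝕜 := ℝ) n a := by
    have := inner_sub_right (𝕜 := ℝ) n x a
    rw [hn2] at this; linarith
  set d : ℝ := inner (𝕜 := ℝ) n a with hd
  have hsec := aux_plane_section_eq K hKc hdisc a b haK hbK hab hdiam n d hn rfl hnab
  constructor
  · intro hxK
    have : x ∈ K ∩ {y : E3 | inner (𝕜 := ℝ) n y = d} := ⟨hxK, hnx⟩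
    rw [hsec] at this
    exact this.1
  · intro hxB
    have : x ∈ closedBall (midpoint ℝ a b) (dist a b / 2) ∩
        {y : E3 | inner (𝕜 := ℝ) n y = d} := ⟨hxB, hnx⟩
    rw [← hsec] at this
    exact this.1

end
end
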